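/- Fix a ∈ ℂ. Define Φ_a : ℂ((t)) × H' → End(H' ⊕ ℂ) by Φ_a(f,g)(k,c) = (π'(f·k') + c·(g + a·π'(f')), 0). Then Φ_a is injective, and for all f,h ∈ ℂ((t)) and g,m ∈ H' one has [Φ_a(f,g), Φ_a(h,m)] = Φ_a( f·h' − h·f' , π'(f·m' − h·g') ). In other words, for every a ∈ ℂ the assignment f∂_t + g ↦ (τ(f∂_t), g + a·π'(f')) is an injective Lie algebra homomorphism from the semidirect product Witt ⋉ H' into sp(H') ⋉ H' (the case a = −1/2 is the map σ used for the extended Torelli map). -/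

import Mathlib

open HahnSeries

/-- Formal derivative on Laurent series: `(D f).coeff n = (n+1) * f.coeff (n+1)`. -/
noncomputable def D (f : LaurentSeries ℂ) : LaurentSeries ℂ where
  coeff := fun n => ((n + 1 : ℤ) : ℂ) * f.coeff (n + 1)
  isPWO_support' := by
    have himg : (Function.support fun n : ℤ => ((n + 1 : ℤ) : ℂ) * f.coeff (n + 1)) ⊆
        (fun n : ℤ => n - 1) '' f.support := by
      intro n hn
      have h : f.coeff (n + 1) ≠ 0 := by
        intro h
        simp [Function.mem_support, h] at hn
      exact ⟨n + 1, h, by ring⟩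
    exact (f.isPWO_support.image_of_monotone
      (fun a b hab => by simpa using sub_le_sub_right hab 1)).mono himg

/-- The residue pairing `⟨f,g⟩ = -Res_{t=0}(f·g')`, i.e. minus the coefficient of
`t⁻¹` in `f * D g`. -/
noncomputable def resPair (f g : LaurentSeries ℂ) : ℂ := -((f * D g).coeff (-1))

/-- `H' ⊂ ℂ((t))`: the subspace of Laurent series with zero constant term. -/
noncomputable def Hprime : Submodule ℂ (LaurentSeries ℂ) where
  carrier := {f | f.coeff 0 = 0}
  zero_mem' := by simp
  add_mem' := by
    intro a b ha hb
    simp only [Set.mem_setOf_eq, HahnSeries.coeff_add] at *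
    simp [ha, hb]
  smul_mem' := by
    intro c f hf
    simp only [Set.mem_setOf_eq, HahnSeries.coeff_smul] at *
    simp [hf]

/-- The projection `π' : ℂ((t)) → H'` killing the constant term. -/
noncomputable def proj0 (f : LaurentSeries ℂ) : Hprime :=
  ⟨f - HahnSeries.C (f.coeff 0), by
    have : (f - HahnSeries.C (f.coeff 0)).coeff (0 : ℤ) = 0 := by
      simp [HahnSeries.coeff_sub, HahnSeries.C_apply, HahnSeries.coeff_single_same]
    exact this⟩

/-- `Φ_a : ℂ((t)) × H' → End(H' ⊕ ℂ)`,
`Φ_a(f,g)(k,c) = (π'(f·k') + c·(g + a·π'(f')), 0)`. -/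
noncomputable def Phi (a : ℂ) (f : LaurentSeries ℂ) (g : Hprime) :
    Hprime × ℂ → Hprime × ℂ :=
  fun x => (proj0 (f * D (x.1 : LaurentSeries ℂ)) + x.2 • (g + a • proj0 (D f)), 0)

/-- Auxiliary lemmas -/
lemma D_coeff (f : LaurentSeries ℂ) (n : ℤ) :
    (D f).coeff n = ((n + 1 : ℤ) : ℂ) * f.coeff (n + 1) := rfl

lemma shift_pwo {s : Set ℤ} (hs : s.IsPWO) : ((fun n : ℤ => n - 1) '' s).IsPWO :=
  hs.image_of_monotone (fun a b hab => by simpa using sub_le_sub_right hab 1)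

lemma D_support (f : LaurentSeries ℂ) :
    (D f).support ⊆ (fun n : ℤ => n - 1) '' f.support := by
  intro n hn
  have h : f.coeff (n + 1) ≠ 0 := by
    intro h
    simp [Function.mem_support, D_coeff, h] at hn
  exact ⟨n + 1, h, by ring⟩

lemma D_add (f g : LaurentSeries ℂ) : D (f + g) = D f + D g := by
  ext n; simp [D_coeff, mul_add]

lemma D_sub (f g : LaurentSeries ℂ) : D (f - g) = D f - D g := by
  ext n; simp [D_coeff, mul_sub]

lemma D_smul (c : ℂ) (f : LaurentSeries ℂ) : D (c • f) = c • D f := by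
  ext n; simp [D_coeff]; ring

lemma D_zero : D (0 : LaurentSeries ℂ) = 0 := by
  ext n; simp [D_coeff]

lemma D_C (r : ℂ) : D (HahnSeries.C r : LaurentSeries ℂ) = 0 := by
  ext n
  rcases eq_or_ne (n + 1) (0 : ℤ) with h | h
  · simp [D_coeff, h]
  · simp [D_coeff, HahnSeries.C_apply, HahnSeries.coeff_single_of_ne h]

lemma D_single (m : ℤ) (r : ℂ) :
    D (HahnSeries.single m r : LaurentSeries ℂ)
      = HahnSeries.single (m - 1) ((m : ℂ) * r) := by
  ext n
  rcases eq_or_ne n (m - 1) with rfl | hne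
  · simp [D_coeff, HahnSeries.coeff_single]
  · have h1 : n + 1 ≠ m := by omega
    simp [D_coeff, HahnSeries.coeff_single_of_ne h1, HahnSeries.coeff_single_of_ne hne]

theorem D_mul (f g : LaurentSeries ℂ) : D (f * g) = D f * g + f * D g := by
  ext n
  have h1 : (D f * g).coeff n =
      ∑ ij ∈ Finset.antidiagonal f.isPWO_support g.isPWO_support (n + 1),
        (ij.1 : ℂ) * (f.coeff ij.1 * g.coeff ij.2) := by
    rw [coeff_mul_left' (shift_pwo f.isPWO_support) (D_support f)]
    refine Finset.sum_bij' (fun p _ => ((p.1 + 1 : ℤ), p.2))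
      (fun p _ => ((p.1 - 1 : ℤ), p.2)) ?_ ?_ ?_ ?_ ?_
    · rintro ⟨i, j⟩ hij
      rw [Finset.mem_antidiagonal] at hij ⊢
      obtain ⟨⟨q, hq, hq'⟩, hj, hsum⟩ := hij
      simp only at hq' hsum ⊢
      have hqi : q = i + 1 := by omega
      exact ⟨hqi ▸ hq, hj, by omega⟩
    · rintro ⟨i, j⟩ hij
      rw [Finset.mem_antidiagonal] at hij ⊢
      obtain ⟨hi, hj, hsum⟩ := hij
      simp only at hsum ⊢
      exact ⟨⟨i, hi, rfl⟩, hj, by omega⟩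
    · rintro ⟨i, j⟩ _; simp
    · rintro ⟨i, j⟩ _; simp
    · rintro ⟨i, j⟩ _
      simp only [D_coeff]
      ring
  have h2 : (f * D g).coeff n =
      ∑ ij ∈ Finset.antidiagonal f.isPWO_support g.isPWO_support (n + 1),
        (ij.2 : ℂ) * (f.coeff ij.1 * g.coeff ij.2) := by
    rw [coeff_mul_right' (shift_pwo g.isPWO_support) (D_support g)]
    refine Finset.sum_bij' (fun p _ => (p.1, (p.2 + 1 : ℤ)))
      (fun p _ => (p.1, (p.2 - 1 : ℤ))) ?_ ?_ ?_ ?_ ?_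
    · rintro ⟨i, j⟩ hij
      rw [Finset.mem_antidiagonal] at hij ⊢
      obtain ⟨hi, ⟨q, hq, hq'⟩, hsum⟩ := hij
      simp only at hq' hsum ⊢
      have hqj : q = j + 1 := by omega
      exact ⟨hi, hqj ▸ hq, by omega⟩
    · rintro ⟨i, j⟩ hij
      rw [Finset.mem_antidiagonal] at hij ⊢
      obtain ⟨hi, hj, hsum⟩ := hij
      simp only at hsum ⊢
      exact ⟨hi, ⟨j, hj, rfl⟩, by omega⟩
    · rintro ⟨i, j⟩ _; simp
    · rintro ⟨i, j⟩ _; simp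
    · rintro ⟨i, j⟩ _
      simp only [D_coeff]
      ring
  rw [HahnSeries.coeff_add, h1, h2, ← Finset.sum_add_distrib, D_coeff, HahnSeries.coeff_mul,
    Finset.mul_sum]
  refine Finset.sum_congr rfl ?_
  rintro ⟨i, j⟩ hij
  rw [Finset.mem_antidiagonal] at hij
  have h3 : i + j = n + 1 := hij.2.2
  have hc : ((i : ℂ) + (j : ℂ)) = ((n : ℂ) + 1) := by
    have := congrArg (fun z : ℤ => (z : ℂ)) h3
    push_cast at this
    simpa using this
  rw [← add_mul, hc]
  push_cast
  ring

lemma proj0_coe (u : LaurentSeries ℂ) :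
    ((proj0 u : Hprime) : LaurentSeries ℂ) = u - HahnSeries.C (u.coeff 0) := rfl

lemma proj0_coeff (u : LaurentSeries ℂ) (n : ℤ) :
    ((proj0 u : Hprime) : LaurentSeries ℂ).coeff n = if n = 0 then 0 else u.coeff n := by
  rcases eq_or_ne n 0 with rfl | hn
  · simp [proj0_coe, HahnSeries.C_apply]
  · rw [if_neg hn]
    simp [proj0_coe, HahnSeries.C_apply, HahnSeries.coeff_single_of_ne hn]

lemma proj0_add (u v : LaurentSeries ℂ) : proj0 (u + v) = proj0 u + proj0 v := by
  apply Subtype.ext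
  ext n
  rcases eq_or_ne n 0 with rfl | hn <;>
    simp [proj0_coeff, Submodule.coe_add, HahnSeries.coeff_add, *]

lemma proj0_sub (u v : LaurentSeries ℂ) : proj0 (u - v) = proj0 u - proj0 v := by
  apply Subtype.ext
  ext n
  rcases eq_or_ne n 0 with rfl | hn <;>
    simp [proj0_coeff, HahnSeries.coeff_sub, *]

lemma proj0_smul (c : ℂ) (u : LaurentSeries ℂ) : proj0 (c • u) = c • proj0 u := by
  apply Subtype.ext
  ext n
  rcases eq_or_ne n 0 with rfl | hn <;>
    simp [proj0_coeff, HahnSeries.coeff_smul, *]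

lemma proj0_zero : proj0 (0 : LaurentSeries ℂ) = 0 := by
  apply Subtype.ext
  ext n
  rcases eq_or_ne n 0 with rfl | hn <;> simp [proj0_coeff, *]

lemma D_proj0 (u : LaurentSeries ℂ) :
    D ((proj0 u : Hprime) : LaurentSeries ℂ) = D u := by
  rw [proj0_coe, D_sub, D_C, sub_zero]

lemma key_inj (f h : LaurentSeries ℂ)
    (H : ∀ k : Hprime, proj0 (f * D (k : LaurentSeries ℂ))
        = proj0 (h * D (k : LaurentSeries ℂ))) : f = h := by
  ext p
  obtain ⟨n, j, hn, hj, hpj⟩ : ∃ n j : ℤ, n ≠ 0 ∧ j ≠ 0 ∧ j = p + (n - 1) := by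
    rcases eq_or_ne p (-1) with rfl | hp
    · exact ⟨3, 1, by norm_num, by norm_num, by norm_num⟩
    · exact ⟨2, p + 1, by norm_num, by omega, by ring⟩
  set k : Hprime := ⟨HahnSeries.single n 1, by
    exact HahnSeries.coeff_single_of_ne (Ne.symm hn)⟩ with hk
  have hD : D (k : LaurentSeries ℂ) = HahnSeries.single (n - 1) ((n : ℂ)) := by
    have : (k : LaurentSeries ℂ) = HahnSeries.single n 1 := rfl
    rw [this, D_single, mul_one]
  have h1 := congrArg (fun x : Hprime => (x : LaurentSeries ℂ).coeff j) (H k)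
  simp only [proj0_coeff, if_neg hj] at h1
  rw [hD] at h1
  have h2 : (f * HahnSeries.single (n - 1) ((n : ℂ))).coeff j = f.coeff p * n := by
    have := HahnSeries.coeff_mul_single_add (r := (n : ℂ)) (x := f) (a := p) (b := n - 1)
    rwa [show p + (n - 1) = j by omega] at this
  have h3 : (h * HahnSeries.single (n - 1) ((n : ℂ))).coeff j = h.coeff p * n := by
    have := HahnSeries.coeff_mul_single_add (r := (n : ℂ)) (x := h) (a := p) (b := n - 1)
    rwa [show p + (n - 1) = j by omega] at this
  rw [h2, h3] at h1
  have hn' : ((n : ℂ)) ≠ 0 := Int.cast_ne_zero.mpr hn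
  exact mul_right_cancel₀ hn' h1


/-- for every `a ∈ ℂ`, `Φ_a` is injective and sends the bracket of
`Witt ⋉ H'` to the commutator, i.e. `f∂_t + g ↦ (τ(f∂_t), g + a·π'(f'))` is an
injective Lie algebra homomorphism `Witt ⋉ H' → sp(H') ⋉ H' ⊆ End(H' ⊕ ℂ)`. -/
theorem Phi_injective_lie_hom (a : ℂ) :
    (∀ (f h : LaurentSeries ℂ) (g m : Hprime), Phi a f g = Phi a h m → f = h ∧ g = m) ∧
    (∀ (f h : LaurentSeries ℂ) (g m : Hprime) (x : Hprime × ℂ),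
      Phi a f g (Phi a h m x) - Phi a h m (Phi a f g x) =
        Phi a (f * D h - h * D f)
          (proj0 (f * D (m : LaurentSeries ℂ) - h * D (g : LaurentSeries ℂ))) x) := by
  constructor
  · intro f h g m heq
    have hfh : f = h := by
      apply key_inj f h
      intro k
      have := congrArg (fun F => (F (k, (0 : ℂ))).1) heq
      simpa [Phi] using this
    subst hfh
    refine ⟨rfl, ?_⟩
    have := congrArg (fun F => (F ((0 : Hprime), (1 : ℂ))).1) heq
    simp only [Phi, ZeroMemClass.coe_zero, D_zero, mul_zero, proj0_zero, zero_add,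
      one_smul] at this
    apply Subtype.ext
    have h3 := congrArg (fun w : Hprime => (w : LaurentSeries ℂ)) this
    simp only [Submodule.coe_add] at h3
    exact add_right_cancel h3
  · intro f h g m x
    obtain ⟨k, c⟩ := x
    set Yh : Hprime := proj0 (h * D (k : LaurentSeries ℂ)) + c • (m + a • proj0 (D h))
      with hYh
    set Yf : Hprime := proj0 (f * D (k : LaurentSeries ℂ)) + c • (g + a • proj0 (D f))
      with hYf
    have e1 : D ((Yh : LaurentSeries ℂ))
        = D (h * D (k : LaurentSeries ℂ))
          + c • (D ((m : LaurentSeries ℂ)) + a • D (D h)) := by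
      have : ((Yh : LaurentSeries ℂ))
          = ((proj0 (h * D (k : LaurentSeries ℂ)) : Hprime) : LaurentSeries ℂ)
            + c • (((m : LaurentSeries ℂ))
              + a • ((proj0 (D h) : Hprime) : LaurentSeries ℂ)) := by
        simp [hYh]
      rw [this, D_add, D_smul, D_add, D_smul, D_proj0, D_proj0]
    have e2 : D ((Yf : LaurentSeries ℂ))
        = D (f * D (k : LaurentSeries ℂ))
          + c • (D ((g : LaurentSeries ℂ)) + a • D (D f)) := by
      have : ((Yf : LaurentSeries ℂ))
          = ((proj0 (f * D (k : LaurentSeries ℂ)) : Hprime) : LaurentSeries ℂ)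
            + c • (((g : LaurentSeries ℂ))
              + a • ((proj0 (D f) : Hprime) : LaurentSeries ℂ)) := by
        simp [hYf]
      rw [this, D_add, D_smul, D_add, D_smul, D_proj0, D_proj0]
    have main : f * D ((Yh : LaurentSeries ℂ)) - h * D ((Yf : LaurentSeries ℂ))
        = (f * D h - h * D f) * D (k : LaurentSeries ℂ)
          + c • ((f * D ((m : LaurentSeries ℂ)) - h * D ((g : LaurentSeries ℂ)))
            + a • D (f * D h - h * D f)) := by
      rw [e1, e2, D_mul h (D (k : LaurentSeries ℂ)), D_mul f (D (k : LaurentSeries ℂ)),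
        D_sub, D_mul f (D h), D_mul h (D f)]
      simp only [← HahnSeries.C_mul_eq_smul]
      ring
    unfold Phi
    simp only [zero_smul, add_zero, Prod.mk_sub_mk, sub_zero, Prod.mk.injEq]
    refine ⟨?_, trivial⟩
    rw [← hYh, ← hYf, ← proj0_sub, main, proj0_add, proj0_smul, proj0_add, proj0_smul]
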